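/- For every integer σ ≥ 2, the cyclic group of order 4σ + 2 admits a (0; 2, 2σ+1, 4σ+2)-generating vector; consequently (0; 2, 2σ+1, 4σ+2) is an actual signature for genus σ. -/

import Mathlib

/-- The Riemann–Hurwitz formula `σ - 1 = N (h - 1 + (1/2) Σ (1 - 1/mᵢ))`
as an equality of rational numbers. -/
def RHFormula (σ N h : ℕ) (m : List ℕ) : Prop :=
  (σ : ℚ) - 1 = (N : ℚ) * ((h : ℚ) - 1 + (1 / 2) * (m.map (fun x => 1 - 1 / (x : ℚ))).sum)

/-- `(h; m₁, …, m_r)` is a potential signature for genus `σ`: each `mᵢ ≥ 2` and there is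
a positive integer `N` with `mᵢ ∣ N` for all `i` satisfying the Riemann–Hurwitz formula. -/
def IsPotentialSignature (σ h : ℕ) (m : List ℕ) : Prop :=
  (∀ x ∈ m, 2 ≤ x) ∧ ∃ N : ℕ, 0 < N ∧ (∀ x ∈ m, x ∣ N) ∧ RHFormula σ N h m

/-- The set `P_σ` of potential signatures for genus `σ`, as a set of pairs `(h, [m₁, …, m_r])`. -/
def PotSig (σ : ℕ) : Set (ℕ × List ℕ) := {p | IsPotentialSignature σ p.1 p.2}
open scoped commutatorElement
/-- `(a, b, c)` is an `(h; m₁, …, m_r)`-generating vector for the group `G`: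
the elements generate `G`, the order of `cᵢ` is `mᵢ`, and
`∏ ⁅aᵢ, bᵢ⁆ · ∏ cⱼ = 1`. -/
def IsGenVector (G : Type*) [Group G] (h : ℕ) (m : List ℕ)
    (a b : Fin h → G) (c : Fin m.length → G) : Prop :=
  Subgroup.closure (Set.range a ∪ Set.range b ∪ Set.range c) = ⊤ ∧
  (∀ i : Fin m.length, orderOf (c i) = m.get i) ∧
  (List.ofFn fun i => ⁅a i, b i⁆).prod * (List.ofFn c).prod = 1

/-- `G` admits an `(h; m₁, …, m_r)`-generating vector. -/
def HasGenVector (G : Type*) [Group G] (h : ℕ) (m : List ℕ) : Prop :=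
  ∃ (a b : Fin h → G) (c : Fin m.length → G), IsGenVector G h m a b c

/-- `(h; m₁, …, m_r)` (with all `mᵢ ≥ 2`) is an actual signature for genus `σ`: some finite
group `G` admits an `(h; m₁, …, m_r)`-generating vector and `N = |G|` satisfies the
Riemann–Hurwitz formula for genus `σ`. -/
def IsActualSignature (σ h : ℕ) (m : List ℕ) : Prop :=
  (∀ x ∈ m, 2 ≤ x) ∧
  ∃ (G : Type) (_ : Group G) (_ : Fintype G),
    HasGenVector G h m ∧ RHFormula σ (Fintype.card G) h m

/-- For every `σ ≥ 2`, the cyclic group of order `4σ + 2` admits a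
`(0; 2, 2σ+1, 4σ+2)`-generating vector; consequently `(0; 2, 2σ+1, 4σ+2)` is an actual
signature for genus `σ`. -/
theorem cyclic_genVector_kulkarni (σ : ℕ) (hσ : 2 ≤ σ) :
    (∀ (G : Type) [Group G] [Fintype G], IsCyclic G → Fintype.card G = 4 * σ + 2 →
      HasGenVector G 0 [2, 2 * σ + 1, 4 * σ + 2]) ∧
    IsActualSignature σ 0 [2, 2 * σ + 1, 4 * σ + 2] := by
  have key : ∀ (G : Type) [Group G] [Fintype G], IsCyclic G → Fintype.card G = 4 * σ + 2 →
      HasGenVector G 0 [2, 2 * σ + 1, 4 * σ + 2] := by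
    intro G _ _ hc hcard
    obtain ⟨g, hg⟩ := hc.exists_generator
    have hog : orderOf g = 4 * σ + 2 := by
      rw [orderOf_eq_card_of_forall_mem_zpowers hg, Nat.card_eq_fintype_card, hcard]
    refine ⟨![], ![], ![g ^ (2*σ+1), g ^ (2*σ), g], ?_, ?_, ?_⟩
    · rw [eq_top_iff]
      intro x _
      have hgc : g ∈ Subgroup.closure
          (Set.range (![] : Fin 0 → G) ∪ Set.range (![] : Fin 0 → G) ∪
            Set.range ![g ^ (2*σ+1), g ^ (2*σ), g]) := by
        apply Subgroup.subset_closure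
        exact Or.inr ⟨2, rfl⟩
      obtain ⟨k, rfl⟩ := hg x
      exact Subgroup.zpow_mem _ hgc k
    · intro i
      fin_cases i
      · show orderOf (g ^ (2*σ+1)) = 2
        rw [orderOf_pow, hog]
        have h1 : Nat.gcd (4*σ+2) (2*σ+1) = 2*σ+1 := by
          rw [Nat.gcd_comm]
          exact Nat.gcd_eq_left ⟨2, by ring⟩
        rw [h1, show 4*σ+2 = (2*σ+1)*2 from by ring,
          Nat.mul_div_cancel_left _ (by omega)]
      · show orderOf (g ^ (2*σ)) = 2*σ+1
        rw [orderOf_pow, hog]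
        have h2 : Nat.gcd (4*σ+2) (2*σ) = 2 := by
          rw [show 4*σ+2 = 2 + (2*σ)*2 from by ring, Nat.gcd_comm,
            Nat.gcd_add_mul_left_right, Nat.gcd_comm]
          exact Nat.gcd_eq_left ⟨σ, rfl⟩
        rw [h2, show 4*σ+2 = 2*(2*σ+1) from by ring,
          Nat.mul_div_cancel_left _ (by omega)]
      · show orderOf g = 4*σ+2
        exact hog
    · have : (List.ofFn fun i : Fin 0 => ⁅(![] : Fin 0 → G) i, (![] : Fin 0 → G) i⁆) = [] :=
        List.ofFn_zero
      rw [this, List.prod_nil, one_mul]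
      show (List.ofFn ![g ^ (2*σ+1), g ^ (2*σ), g]).prod = 1
      have : (List.ofFn ![g ^ (2*σ+1), g ^ (2*σ), g]) = [g ^ (2*σ+1), g ^ (2*σ), g] := by
        simp [List.ofFn_succ]
      rw [this]
      simp only [List.prod_cons, List.prod_nil, mul_one]
      rw [← pow_succ, ← pow_add, show 2*σ+1+(2*σ+1) = 4*σ+2 from by ring,
        ← hog, pow_orderOf_eq_one]
  refine ⟨key, ?_, ?_⟩
  · intro x hx
    simp at hx
    rcases hx with h | h | h <;> omega
  · haveI : NeZero (4*σ+2) := ⟨by omega⟩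
    refine ⟨Multiplicative (ZMod (4*σ+2)), inferInstance, inferInstance, ?_, ?_⟩
    · apply key
      · infer_instance
      · rw [Fintype.card_multiplicative, ZMod.card]
    · rw [Fintype.card_multiplicative, ZMod.card]
      have e1 : (2*(σ:ℚ)+1) ≠ 0 := by positivity
      have e2 : (4*(σ:ℚ)+2) ≠ 0 := by positivity
      simp only [RHFormula, List.map_cons, List.map_nil, List.sum_cons, List.sum_nil]
      simp only [bind, pure, List.flatMap_cons, List.flatMap_nil, List.map_cons, List.map_nil, List.sum_cons, List.sum_nil, List.cons_append, List.nil_append]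
      push_cast
      field_simp
      ring
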